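/- Let p be a probability measure on (X_a,𝒳_a)⊗(X_b,𝒳_b)⊗(Y,𝒴)⊗(Λ,ℒ) satisfying strong determinism: for all J_a ∈ 𝒳_a, p[J_a‖𝒴_a⊗ℒ] ∈ {0,1} p-almost surely, and symmetrically for b. Then p satisfies parameter independence: p[J_a‖𝒴⊗ℒ] = p[J_a‖𝒴_a⊗ℒ] p-almost surely for all J_a ∈ 𝒳_a (and symmetrically for b). -/

import Mathlib

open MeasureTheory

lemma aux_det {Ω : Type*} {m₁ m₂ : MeasurableSpace Ω} [m0 : MeasurableSpace Ω]
    (p : Measure Ω) [IsProbabilityMeasure p] (hm₂₁ : m₂ ≤ m₁) (hm₁ : m₁ ≤ m0)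
    {S : Set Ω} (hS : MeasurableSet[m0] S)
    (hg : ∀ᵐ ω ∂p, (p[S.indicator (fun _ => (1:ℝ))|m₂]) ω ∈ ({0,1} : Set ℝ)) :
    p[S.indicator (fun _ => (1:ℝ))|m₁] =ᵐ[p] p[S.indicator (fun _ => (1:ℝ))|m₂] := by
  have hm₂ : m₂ ≤ m0 := hm₂₁.trans hm₁
  set f : Ω → ℝ := S.indicator (fun _ => (1:ℝ)) with hf
  have hf_int : Integrable f p := (integrable_const (1:ℝ)).indicator hS
  set g : Ω → ℝ := p[f|m₂] with hgdef
  have hgsm : StronglyMeasurable[m₂] g := stronglyMeasurable_condExp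
  set A : Set Ω := g ⁻¹' {1} with hA
  have hAm2 : MeasurableSet[m₂] A := hgsm.measurable (measurableSet_singleton 1)
  have hAm : MeasurableSet[m0] A := hm₂ _ hAm2
  have hfnn : 0 ≤ f := fun x => Set.indicator_nonneg (fun _ _ => zero_le_one) x
  have hfle : ∀ x, f x ≤ 1 := fun x => Set.indicator_le_self' (fun _ _ => zero_le_one) x
  -- on Aᶜ : g = 0 a.e., so ∫ f = 0, so f = 0 a.e.
  have hg0 : g =ᵐ[p.restrict Aᶜ] 0 := by
    filter_upwards [ae_restrict_of_ae hg, ae_restrict_mem hAm.compl] with x hx hxA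
    rcases hx with h | h
    · exact h
    · exact absurd h hxA
  have hintc : ∫ x in Aᶜ, f x ∂p = 0 := by
    rw [← setIntegral_condExp hm₂ hf_int hAm2.compl]
    exact (integral_congr_ae hg0).trans (integral_zero _ _)
  have hf0 : f =ᵐ[p.restrict Aᶜ] 0 := by
    rw [← integral_eq_zero_iff_of_nonneg hfnn (hf_int.restrict)]
    exact hintc
  have hfg_c : f =ᵐ[p.restrict Aᶜ] g := hf0.trans hg0.symm
  -- on A : g = 1 pointwise, ∫ (1 - f) = 0, f ≤ 1 so f = 1 a.e.
  have hintA : ∫ x in A, f x ∂p = (p A).toReal := by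
    rw [← setIntegral_condExp hm₂ hf_int hAm2]
    have hgone : Set.EqOn g (fun _ => (1:ℝ)) A := fun x hx => hx
    rw [setIntegral_congr_fun hAm hgone, setIntegral_const]
    simp [Measure.real]
  have hsub : ∫ x in A, ((1:ℝ) - f x) ∂p = 0 := by
    rw [integral_sub (integrable_const (1:ℝ)).restrict hf_int.restrict, hintA,
      setIntegral_const]
    simp [Measure.real]
  have hf1 : (fun x => (1:ℝ) - f x) =ᵐ[p.restrict A] 0 :=
    (integral_eq_zero_iff_of_nonneg (fun x => sub_nonneg.2 (hfle x))
      (((integrable_const (1:ℝ)).restrict).sub hf_int.restrict)).mp hsub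
  have hfg_A : f =ᵐ[p.restrict A] g := by
    have hgA : ∀ᵐ x ∂p.restrict A, g x = 1 := by
      filter_upwards [ae_restrict_mem hAm] with x hx; exact hx
    filter_upwards [hf1, hgA] with x h1 h2
    simp only [Pi.zero_apply] at h1
    have hfx : f x = 1 := by linarith
    rw [hfx, h2]
  have hstep1 : f =ᵐ[p] g :=
    ae_of_ae_restrict_of_ae_restrict_compl A hfg_A hfg_c
  calc p[f|m₁] =ᵐ[p] p[g|m₁] := condExp_congr_ae hstep1
    _ =ᵐ[p] g := by
      rw [condExp_of_stronglyMeasurable hm₁ (hgsm.mono hm₂₁) integrable_condExp]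

theorem stmt_12 {Xa Xb Ya Yb Λ : Type*}
    [MeasurableSpace Xa] [MeasurableSpace Xb] [MeasurableSpace Ya] [MeasurableSpace Yb]
    [MeasurableSpace Λ]
    (p : Measure (Xa × Xb × (Ya × Yb) × Λ)) [IsProbabilityMeasure p]
    (mYL mYaL mYbL : MeasurableSpace (Xa × Xb × (Ya × Yb) × Λ))
    (hYL : mYL = MeasurableSpace.comap (fun ω => ω.2.2) inferInstance)
    (hYaL : mYaL = MeasurableSpace.comap (fun ω => (ω.2.2.1.1, ω.2.2.2)) inferInstance)
    (hYbL : mYbL = MeasurableSpace.comap (fun ω => (ω.2.2.1.2, ω.2.2.2)) inferInstance)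
    -- strong determinism
    (hSDa : ∀ Ja : Set Xa, MeasurableSet Ja →
      ∀ᵐ ω ∂p,
        (p[Set.indicator {w : Xa × Xb × (Ya × Yb) × Λ | w.1 ∈ Ja} (fun _ => (1 : ℝ)) | mYaL]) ω
          ∈ ({0, 1} : Set ℝ))
    (hSDb : ∀ Jb : Set Xb, MeasurableSet Jb →
      ∀ᵐ ω ∂p,
        (p[Set.indicator {w : Xa × Xb × (Ya × Yb) × Λ | w.2.1 ∈ Jb} (fun _ => (1 : ℝ)) | mYbL]) ω
          ∈ ({0, 1} : Set ℝ)) :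
    -- parameter independence
    (∀ Ja : Set Xa, MeasurableSet Ja →
      p[Set.indicator {w : Xa × Xb × (Ya × Yb) × Λ | w.1 ∈ Ja} (fun _ => (1 : ℝ)) | mYL]
        =ᵐ[p]
      p[Set.indicator {w : Xa × Xb × (Ya × Yb) × Λ | w.1 ∈ Ja} (fun _ => (1 : ℝ)) | mYaL]) ∧
    (∀ Jb : Set Xb, MeasurableSet Jb →
      p[Set.indicator {w : Xa × Xb × (Ya × Yb) × Λ | w.2.1 ∈ Jb} (fun _ => (1 : ℝ)) | mYL]
        =ᵐ[p]
      p[Set.indicator {w : Xa × Xb × (Ya × Yb) × Λ | w.2.1 ∈ Jb} (fun _ => (1 : ℝ)) | mYbL]) := by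
  subst hYL hYaL hYbL
  have hm₁ : MeasurableSpace.comap (fun ω : Xa × Xb × (Ya × Yb) × Λ => ω.2.2) inferInstance
      ≤ (inferInstance : MeasurableSpace (Xa × Xb × (Ya × Yb) × Λ)) :=
    measurable_iff_comap_le.mp (measurable_snd.comp measurable_snd)
  have hma : MeasurableSpace.comap
        (fun ω : Xa × Xb × (Ya × Yb) × Λ => (ω.2.2.1.1, ω.2.2.2)) inferInstance
      ≤ MeasurableSpace.comap (fun ω : Xa × Xb × (Ya × Yb) × Λ => ω.2.2) inferInstance := by
    have h : (fun ω : Xa × Xb × (Ya × Yb) × Λ => (ω.2.2.1.1, ω.2.2.2))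
        = (fun yl : (Ya × Yb) × Λ => (yl.1.1, yl.2)) ∘ (fun ω => ω.2.2) := rfl
    rw [h, ← MeasurableSpace.comap_comp]
    exact MeasurableSpace.comap_mono
      (measurable_iff_comap_le.mp ((measurable_fst.fst).prodMk measurable_snd))
  have hmb : MeasurableSpace.comap
        (fun ω : Xa × Xb × (Ya × Yb) × Λ => (ω.2.2.1.2, ω.2.2.2)) inferInstance
      ≤ MeasurableSpace.comap (fun ω : Xa × Xb × (Ya × Yb) × Λ => ω.2.2) inferInstance := by
    have h : (fun ω : Xa × Xb × (Ya × Yb) × Λ => (ω.2.2.1.2, ω.2.2.2))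
        = (fun yl : (Ya × Yb) × Λ => (yl.1.2, yl.2)) ∘ (fun ω => ω.2.2) := rfl
    rw [h, ← MeasurableSpace.comap_comp]
    exact MeasurableSpace.comap_mono
      (measurable_iff_comap_le.mp ((measurable_fst.snd).prodMk measurable_snd))
  refine ⟨fun Ja hJa => ?_, fun Jb hJb => ?_⟩
  · exact aux_det p hma hm₁ (measurable_fst hJa) (hSDa Ja hJa)
  · exact aux_det p hmb hm₁ ((measurable_fst.comp measurable_snd) hJb) (hSDb Jb hJb)
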